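/- (Van der Corput's lemma) Let a < b be real numbers, ħ > 0, γ > 0, and let f : ℝ → ℝ be continuously differentiable on [a,b] with |f′(x)| ≥ γ for all x ∈ [a,b], and with f′ monotone (i.e. either monotone nondecreasing or monotone nonincreasing) on [a,b]. Then |∫_a^b exp(i f(x)/ħ) dx| ≤ 4ħ/γ. -/

import Mathlib

open Real Filter Set intervalIntegral MeasureTheory

lemma bonnet {a b K : ℝ} (hab : a ≤ b) (hK : 0 ≤ K) {g : ℝ → ℝ} (hgm : Antitone g)
    (hgc : Continuous g) (hg0 : ∀ x, 0 ≤ g x) {h : ℝ → ℂ} (hc : Continuous h)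
    (hbd : ∀ u ∈ Set.Icc a b, ‖∫ x in a..u, h x‖ ≤ K) :
    ‖∫ x in a..b, g x • h x‖ ≤ g a * K := by
  set M := g a with hM
  have hM0 : 0 ≤ M := hg0 a
  set φ : ℝ × ℝ → ℂ := fun p => Set.indicator {q : ℝ × ℝ | q.2 < g q.1} (fun q => h q.1) p
    with hφdef
  have hSmeas : MeasurableSet {q : ℝ × ℝ | q.2 < g q.1} :=
    measurableSet_lt measurable_snd (hgc.measurable.comp measurable_fst)
  -- pointwise layer-cake identity
  have key : ∀ x ∈ Set.Ioc a b, g x • h x = ∫ t in Set.Ioc 0 M, φ (x, t) := by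
    intro x hx
    have hgxM : g x ≤ M := hgm hx.1.le
    have h1 : (fun t => φ (x, t)) = Set.indicator (Set.Iio (g x)) (fun _ => h x) := by
      funext t
      by_cases ht : t < g x
      · simp [hφdef, Set.indicator, ht]
      · simp [hφdef, Set.indicator, ht]
    rw [h1, MeasureTheory.setIntegral_indicator measurableSet_Iio,
      MeasureTheory.setIntegral_const]
    have h2 : Set.Ioc 0 M ∩ Set.Iio (g x) = Set.Ioo 0 (g x) := by
      ext t
      constructor
      · rintro ⟨⟨ht1, _⟩, ht3⟩; exact ⟨ht1, ht3⟩
      · rintro ⟨ht1, ht3⟩; exact ⟨⟨ht1, ht3.le.trans hgxM⟩, ht3⟩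
    rw [h2, Measure.real, Real.volume_Ioo, ENNReal.toReal_ofReal (by linarith [hg0 x])]
    norm_num
  -- integrability for Fubini
  obtain ⟨C, hC⟩ : ∃ C, ∀ x ∈ Set.Icc a b, ‖h x‖ ≤ C :=
    isCompact_Icc.exists_bound_of_continuousOn hc.continuousOn
  have hφmeas : AEStronglyMeasurable φ
      ((volume.restrict (Set.Ioc a b)).prod (volume.restrict (Set.Ioc 0 M))) :=
    (((hc.comp continuous_fst).stronglyMeasurable).indicator hSmeas).aestronglyMeasurable
  have hprodeq : (volume.restrict (Set.Ioc a b)).prod (volume.restrict (Set.Ioc 0 M))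
      = (volume.prod volume).restrict (Set.Ioc a b ×ˢ Set.Ioc 0 M) :=
    MeasureTheory.Measure.prod_restrict _ _
  haveI : IsFiniteMeasure (volume.restrict (Set.Ioc a b)) :=
    ⟨by rw [Measure.restrict_apply_univ]; exact measure_Ioc_lt_top⟩
  haveI : IsFiniteMeasure (volume.restrict (Set.Ioc 0 M)) :=
    ⟨by rw [Measure.restrict_apply_univ]; exact measure_Ioc_lt_top⟩
  have hφint : Integrable φ
      ((volume.restrict (Set.Ioc a b)).prod (volume.restrict (Set.Ioc 0 M))) := by
    apply Integrable.mono' (integrable_const (max C 0)) hφmeas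
    have hmem : ∀ᵐ p ∂((volume.restrict (Set.Ioc a b)).prod (volume.restrict (Set.Ioc 0 M))),
        p ∈ Set.Ioc a b ×ˢ Set.Ioc 0 M := by
      rw [hprodeq]
      exact ae_restrict_mem (measurableSet_Ioc.prod measurableSet_Ioc)
    filter_upwards [hmem] with p hp
    by_cases hps : p ∈ {q : ℝ × ℝ | q.2 < g q.1}
    · simp only [hφdef, Set.indicator_of_mem hps]
      exact le_max_of_le_left (hC _ (Set.Ioc_subset_Icc_self hp.1))
    · simp [hφdef, Set.indicator_of_notMem hps]
  -- bound on the inner (x-)integral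
  have inner_bd : ∀ t ∈ Set.Ioc 0 M, ‖∫ x in Set.Ioc a b, φ (x, t)‖ ≤ K := by
    intro t ht
    have h1 : (fun x => φ (x, t)) = Set.indicator {x : ℝ | t < g x} h := by
      funext x
      by_cases hx : t < g x
      · simp [hφdef, Set.indicator, hx]
      · simp [hφdef, Set.indicator, hx]
    have hms : MeasurableSet {x : ℝ | t < g x} := hgc.measurable measurableSet_Ioi
    rw [h1, MeasureTheory.setIntegral_indicator hms]
    rcases (Set.Ioc a b ∩ {x : ℝ | t < g x}).eq_empty_or_nonempty with hA | hA
    · rw [hA]; simpa using hK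
    · set A := Set.Ioc a b ∩ {x : ℝ | t < g x} with hAdef
      have hAsub : A ⊆ Set.Ioc a b := Set.inter_subset_left
      have hbdd : BddAbove A := ⟨b, fun z hz => (hAsub hz).2⟩
      set d := sSup A with hd
      obtain ⟨y, hy⟩ := hA
      have hyd : y ≤ d := le_csSup hbdd hy
      have had : a < d := lt_of_lt_of_le (hAsub hy).1 hyd
      have hdb : d ≤ b := csSup_le ⟨y, hy⟩ fun z hz => (hAsub hz).2
      have hsub1 : Set.Ioo a d ⊆ A := by
        intro z hz
        obtain ⟨y', hy', hzy'⟩ := exists_lt_of_lt_csSup ⟨y, hy⟩ hz.2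
        exact ⟨⟨hz.1, hzy'.le.trans (hAsub hy').2⟩, lt_of_lt_of_le hy'.2 (hgm hzy'.le)⟩
      have hsub2 : A ⊆ Set.Ioc a d := fun z hz => ⟨(hAsub hz).1, le_csSup hbdd hz⟩
      have hae : A =ᵐ[volume] Set.Ioc a d := by
        rw [MeasureTheory.ae_eq_set]
        constructor
        · rw [Set.diff_eq_empty.mpr hsub2]; simp
        · have hsubd : Set.Ioc a d \ A ⊆ {d} := by
            intro z hz
            simp only [Set.mem_singleton_iff]
            rcases lt_or_eq_of_le hz.1.2 with hlt | heq
            · exact absurd (hsub1 ⟨hz.1.1, hlt⟩) hz.2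
            · exact heq
          exact measure_mono_null hsubd Real.volume_singleton
      rw [MeasureTheory.setIntegral_congr_set hae, ← intervalIntegral.integral_of_le had.le]
      exact hbd d ⟨had.le, hdb⟩
  -- put everything together
  calc ‖∫ x in a..b, g x • h x‖
      = ‖∫ x in Set.Ioc a b, ∫ t in Set.Ioc 0 M, φ (x, t)‖ := by
        rw [intervalIntegral.integral_of_le hab,
          MeasureTheory.setIntegral_congr_fun measurableSet_Ioc key]
    _ = ‖∫ t in Set.Ioc 0 M, ∫ x in Set.Ioc a b, φ (x, t)‖ := by
        rw [MeasureTheory.integral_integral_swap hφint]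
    _ ≤ K * (volume (Set.Ioc 0 M)).toReal := by
        apply MeasureTheory.norm_setIntegral_le_of_norm_le_const measure_Ioc_lt_top inner_bd
    _ = g a * K := by
        rw [Real.volume_Ioc, ENNReal.toReal_ofReal (by linarith)]
        ring_nf
        rw [hM]
lemma bonnet' {a b K : ℝ} (hab : a ≤ b) (hK : 0 ≤ K) {g : ℝ → ℝ} (hgm : Monotone g)
    (hgc : Continuous g) (hg0 : ∀ x, 0 ≤ g x) {h : ℝ → ℂ} (hc : Continuous h)
    (hbd : ∀ u ∈ Set.Icc a b, ‖∫ x in u..b, h x‖ ≤ K) :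
    ‖∫ x in a..b, g x • h x‖ ≤ g b * K := by
  have h1 : ∫ x in (-b)..(-a), (fun x => g x • h x) (-x) = ∫ x in a..b, g x • h x := by
    rw [intervalIntegral.integral_comp_neg (fun x => g x • h x)]
    norm_num
  rw [← h1]
  have hgm' : Antitone (fun x => g (-x)) := fun x y hxy => hgm (neg_le_neg hxy)
  have := bonnet (neg_le_neg hab) hK hgm' (hgc.comp continuous_neg) (fun x => hg0 (-x))
    (hc.comp continuous_neg) (g := fun x => g (-x)) (h := fun x => h (-x)) ?_
  · simpa using this
  · intro u hu
    have h2 : ∫ x in (-b)..u, (fun x => h (-x)) x = ∫ x in (-u)..b, h x := by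
      have := intervalIntegral.integral_comp_neg (a := -b) (b := u) h
      simpa using this
    rw [h2]
    exact hbd (-u) ⟨le_neg.mpr hu.2, neg_le.mp hu.1⟩

lemma vdc_conj_integral {F : ℝ → ℂ} {a b : ℝ} :
    ∫ x in a..b, (starRingEnd ℂ) (F x) = (starRingEnd ℂ) (∫ x in a..b, F x) := by
  rw [intervalIntegral, intervalIntegral, integral_conj, integral_conj, ← map_sub]

lemma vdc_pos (a b hbar γ : ℝ) (hab : a < b) (hh : 0 < hbar) (hγ : 0 < γ)
    (f f' : ℝ → ℝ)
    (hderiv : ∀ x ∈ Set.Icc a b, HasDerivAt f (f' x) x)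
    (hcont : ContinuousOn f' (Set.Icc a b))
    (hlow : ∀ x ∈ Set.Icc a b, γ ≤ f' x)
    (hmono : MonotoneOn f' (Set.Icc a b) ∨ AntitoneOn f' (Set.Icc a b)) :
    ‖∫ x in a..b, Complex.exp (Complex.I * f x / hbar)‖ ≤ 4 * hbar / γ := by
  set c : ℝ → ℝ := fun x => min (max x a) b with hcdef
  have hcmono : Monotone c := fun x y hxy => min_le_min (max_le_max hxy le_rfl) le_rfl
  have hccont : Continuous c := (continuous_id.max continuous_const).min continuous_const
  have hcmem : ∀ x, c x ∈ Set.Icc a b := fun x => ⟨le_min (le_max_right x a) hab.le, min_le_right _ _⟩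
  have hcid : ∀ x ∈ Set.Icc a b, c x = x := by
    intro x hx
    simp [hcdef, max_eq_left hx.1, min_eq_left hx.2]
  set F' : ℝ → ℝ := fun x => f' (c x) with hF'def
  have hF'cont : Continuous F' := hcont.comp_continuous hccont hcmem
  have hF'γ : ∀ x, γ ≤ F' x := fun x => hlow _ (hcmem x)
  have hF'pos : ∀ x, 0 < F' x := fun x => lt_of_lt_of_le hγ (hF'γ x)
  have hfc : ContinuousOn f (Set.Icc a b) :=
    fun x hx => (hderiv x hx).continuousAt.continuousWithinAt
  set g : ℝ → ℝ := fun x => hbar / F' x with hgdef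
  have hgc : Continuous g := continuous_const.div hF'cont (fun x => (hF'pos x).ne')
  have hg0 : ∀ x, 0 ≤ g x := fun x => div_nonneg hh.le (hF'pos x).le
  have hgle : ∀ x, g x ≤ hbar / γ := by
    intro x
    exact div_le_div_of_nonneg_left hh.le hγ (hF'γ x)
  set h : ℝ → ℂ := fun x => (F' x / hbar) • Complex.exp (Complex.I * (f (c x)) / hbar)
    with hhdef
  have hhc : Continuous h := by
    apply Continuous.smul ((hF'cont.div_const hbar))
    exact Complex.continuous_exp.comp
      ((continuous_const.mul (Complex.continuous_ofReal.comp
        (hfc.comp_continuous hccont hcmem))).div_const hbar)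
  -- the integral identity
  have heq : ∫ x in a..b, Complex.exp (Complex.I * f x / hbar) = ∫ x in a..b, g x • h x := by
    apply intervalIntegral.integral_congr
    intro x hx
    rw [Set.uIcc_of_le hab.le] at hx
    have hne : f' x ≠ 0 := (lt_of_lt_of_le hγ (hlow x hx)).ne'
    simp only [hgdef, hhdef, hF'def, hcid x hx, smul_smul]
    rw [div_mul_div_comm, mul_comm hbar (f' x), div_self (by positivity), one_smul]
  -- the antiderivative
  set H : ℝ → ℂ := fun y => (-Complex.I) * Complex.exp (Complex.I * f y / hbar) with hHdef
  have hHderiv : ∀ x ∈ Set.Icc a b, HasDerivAt H (h x) x := by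
    intro x hx
    have h1 : HasDerivAt (fun y => (f y : ℂ)) (f' x) x := (hderiv x hx).ofReal_comp
    have h2 : HasDerivAt (fun y => Complex.I * (f y : ℂ) / hbar)
        (Complex.I * (f' x : ℂ) / hbar) x := (h1.const_mul Complex.I).div_const _
    have h3 := h2.cexp
    have h4 := h3.const_mul (-Complex.I)
    convert h4 using 1
    · rfl
    simp only [hhdef, hF'def, hcid x hx, Complex.real_smul]
    push_cast
    set e := Complex.exp (Complex.I * (f x : ℂ) / hbar)
    linear_combination (e * ((f' x : ℂ) / hbar)) * Complex.I_sq
  have hHnorm : ∀ y : ℝ, ‖H y‖ = 1 := by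
    intro y
    have : Complex.I * (f y : ℂ) / (hbar : ℂ) = ((f y / hbar : ℝ) : ℂ) * Complex.I := by
      push_cast; ring
    rw [hHdef]
    simp only [norm_mul, norm_neg, Complex.norm_I, one_mul, this,
      Complex.norm_exp]
    simp
  have hintable : ∀ u v : ℝ, IntervalIntegrable h MeasureTheory.volume u v :=
    fun u v => hhc.intervalIntegrable u v
  have hftc : ∀ u ∈ Set.Icc a b, ∀ v ∈ Set.Icc a b, ∫ x in u..v, h x = H v - H u := by
    intro u hu v hv
    apply intervalIntegral.integral_eq_sub_of_hasDerivAt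
    · intro x hx
      apply hHderiv x
      have : Set.uIcc u v ⊆ Set.Icc a b := Set.uIcc_subset_Icc hu hv
      exact this hx
    · exact hintable u v
  have hbd2 : ∀ u ∈ Set.Icc a b, ∀ v ∈ Set.Icc a b, ‖∫ x in u..v, h x‖ ≤ 2 := by
    intro u hu v hv
    rw [hftc u hu v hv]
    calc ‖H v - H u‖ ≤ ‖H v‖ + ‖H u‖ := norm_sub_le _ _
      _ = 2 := by rw [hHnorm, hHnorm]; norm_num
  rw [heq]
  have hfinal : ∀ G : ℝ, G ≤ hbar / γ → G * 2 ≤ 4 * hbar / γ := by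
    intro G hG
    have h1 : (0:ℝ) ≤ hbar / γ := div_nonneg hh.le hγ.le
    calc G * 2 ≤ (hbar / γ) * 2 := by linarith
      _ ≤ 4 * hbar / γ := by rw [div_mul_eq_mul_div, mul_comm]; gcongr <;> linarith
  rcases hmono with hm | hm
  · -- f' nondecreasing ⇒ g antitone
    have hganti : Antitone g := by
      intro x y hxy
      exact div_le_div_of_nonneg_left hh.le (hF'pos x) (hm (hcmem x) (hcmem y) (hcmono hxy))
    have := bonnet hab.le (by norm_num) hganti hgc hg0 hhc
      (fun u hu => hbd2 a ⟨le_refl a, hab.le⟩ u hu)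
    exact le_trans this (hfinal _ (hgle a))
  · -- f' nonincreasing ⇒ g monotone
    have hgmono : Monotone g := by
      intro x y hxy
      exact div_le_div_of_nonneg_left hh.le (hF'pos y) (hm (hcmem x) (hcmem y) (hcmono hxy))
    have := bonnet' hab.le (by norm_num) hgmono hgc hg0 hhc
      (fun u hu => hbd2 u hu b ⟨hab.le, le_refl b⟩)
    exact le_trans this (hfinal _ (hgle b))

/-- Van der Corput's lemma: if `|f'| ≥ γ > 0` on `[a,b]` with `f'` continuous and monotone
there, then `|∫_a^b exp(i f(x)/hbar) dx| ≤ 4 hbar/γ`. -/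
theorem van_der_corput (a b hbar γ : ℝ) (hab : a < b) (hh : 0 < hbar) (hγ : 0 < γ)
    (f f' : ℝ → ℝ)
    (hderiv : ∀ x ∈ Set.Icc a b, HasDerivAt f (f' x) x)
    (hcont : ContinuousOn f' (Set.Icc a b))
    (hlow : ∀ x ∈ Set.Icc a b, γ ≤ |f' x|)
    (hmono : MonotoneOn f' (Set.Icc a b) ∨ AntitoneOn f' (Set.Icc a b)) :
    ‖∫ x in a..b, Complex.exp (Complex.I * f x / hbar)‖ ≤ 4 * hbar / γ := by
  have hIcc : ∀ x ∈ Set.Icc a b, f' x ≠ 0 := by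
    intro x hx h0
    have := hlow x hx
    rw [h0, abs_zero] at this
    linarith
  have ha : a ∈ Set.Icc a b := ⟨le_refl a, hab.le⟩
  have hsign : (∀ x ∈ Set.Icc a b, 0 < f' x) ∨ (∀ x ∈ Set.Icc a b, f' x < 0) := by
    rcases lt_or_gt_of_ne (hIcc a ha) with hneg | hpos
    · right
      intro x hx
      by_contra hcon
      push_neg at hcon
      have hpos' : 0 < f' x := lt_of_le_of_ne hcon (Ne.symm (hIcc x hx))
      have hsub : Set.uIcc a x ⊆ Set.Icc a b := Set.uIcc_subset_Icc ha hx
      have h0 : (0:ℝ) ∈ Set.uIcc (f' a) (f' x) := Set.mem_uIcc.mpr (Or.inl ⟨hneg.le, hpos'.le⟩)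
      obtain ⟨z, hz, hz0⟩ := intermediate_value_uIcc (hcont.mono hsub) h0
      exact hIcc z (hsub hz) hz0
    · left
      intro x hx
      by_contra hcon
      push_neg at hcon
      have hneg' : f' x < 0 := lt_of_le_of_ne hcon (hIcc x hx)
      have hsub : Set.uIcc a x ⊆ Set.Icc a b := Set.uIcc_subset_Icc ha hx
      have h0 : (0:ℝ) ∈ Set.uIcc (f' a) (f' x) := Set.mem_uIcc.mpr (Or.inr ⟨hneg'.le, hpos.le⟩)
      obtain ⟨z, hz, hz0⟩ := intermediate_value_uIcc (hcont.mono hsub) h0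
      exact hIcc z (hsub hz) hz0
  rcases hsign with hpos | hneg
  · exact vdc_pos a b hbar γ hab hh hγ f f' hderiv hcont
      (fun x hx => le_trans (hlow x hx) (le_of_eq (abs_of_pos (hpos x hx)))) hmono
  · have hconj : ∫ x in a..b, Complex.exp (Complex.I * f x / hbar)
        = (starRingEnd ℂ) (∫ x in a..b, Complex.exp (Complex.I * (-f x) / hbar)) := by
      rw [← vdc_conj_integral]
      apply intervalIntegral.integral_congr
      intro x _
      have hpt : (starRingEnd ℂ) (Complex.exp (Complex.I * (-(f x : ℂ)) / hbar))
          = Complex.exp (Complex.I * f x / hbar) := by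
        rw [← Complex.exp_conj]
        congr 1
        rw [map_div₀, map_mul, Complex.conj_I, map_neg, Complex.conj_ofReal,
          Complex.conj_ofReal]
        ring
      exact hpt.symm
    rw [hconj, RCLike.norm_conj]
    have hmono' : MonotoneOn (fun x => -f' x) (Set.Icc a b) ∨
        AntitoneOn (fun x => -f' x) (Set.Icc a b) := by
      rcases hmono with hm | hm
      · exact Or.inr (fun x hx y hy hxy => neg_le_neg (hm hx hy hxy))
      · exact Or.inl (fun x hx y hy hxy => neg_le_neg (hm hx hy hxy))
    have h5 := vdc_pos a b hbar γ hab hh hγ (fun x => -f x) (fun x => -f' x)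
      (fun x hx => (hderiv x hx).neg) hcont.neg
      (fun x hx => le_trans (hlow x hx) (le_of_eq (abs_of_neg (hneg x hx)))) hmono'
    have hcast : ∫ x in a..b, Complex.exp (Complex.I * ((-f x : ℝ) : ℂ) / hbar)
        = ∫ x in a..b, Complex.exp (Complex.I * (-(f x : ℂ)) / hbar) := by
      apply intervalIntegral.integral_congr
      intro x _
      push_cast
      ring_nf
    rw [hcast] at h5
    exact h5
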